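/- Let N₄ act faithfully by orientation-preserving homeomorphisms of [0,1], and let x₀ ∈ (0,1) be any point not fixed by c. Then N₄ acts faithfully on the orbit of x₀: the only element of N₄ fixing every point of the orbit of x₀ is the identity. -/

import Mathlib

/-- A 4×4 integer matrix is lower unitriangular if it has `1`s on the diagonal
and `0`s above the diagonal. -/
def IsUnitriLower (M : Matrix (Fin 4) (Fin 4) ℤ) : Prop :=
  (∀ i, M i i = 1) ∧ ∀ i j : Fin 4, i < j → M i j = 0

/-- `N₄`: the group of 4×4 lower triangular integer matrices with `1`s on the diagonal,
realized as a subgroup of the units of the matrix ring. -/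
def N4 : Subgroup (Matrix (Fin 4) (Fin 4) ℤ)ˣ where
  carrier := {u | IsUnitriLower u.val}
  one_mem' := by
    refine ⟨fun i => ?_, fun i j hij => ?_⟩
    · simp [Matrix.one_apply_eq]
    · simp [Units.val_one, Matrix.one_apply_ne (ne_of_lt hij)]
  mul_mem' := by
    rintro a b ⟨ha1, ha2⟩ ⟨hb1, hb2⟩
    refine ⟨fun i => ?_, fun i j hij => ?_⟩
    · have key : ∀ k : Fin 4, a.val i k * b.val k i = if k = i then 1 else 0 := by
        intro k
        rcases lt_trichotomy k i with h | h | h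
        · rw [hb2 k i h, mul_zero, if_neg h.ne]
        · subst h
          rw [ha1, hb1, one_mul, if_pos rfl]
        · rw [ha2 i k h, zero_mul, if_neg h.ne']
      show (a.val * b.val) i i = 1
      rw [Matrix.mul_apply]
      simp [key]
    · show (a.val * b.val) i j = 0
      rw [Matrix.mul_apply]
      refine Finset.sum_eq_zero fun k _ => ?_
      rcases lt_or_ge i k with h | h
      · rw [ha2 i k h, zero_mul]
      · rw [hb2 k j (lt_of_le_of_lt h hij), mul_zero]
  inv_mem' := by
    rintro x ⟨ha1, ha2⟩
    set A := x.val with hA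
    set B := (x⁻¹).val with hB
    have hBA : B * A = 1 := by
      rw [hB, hA, ← Units.val_mul]
      simp
    have key : ∀ i j : Fin 4,
        B i 0 * A 0 j + B i 1 * A 1 j + B i 2 * A 2 j + B i 3 * A 3 j
          = if i = j then 1 else 0 := by
      intro i j
      have h : (B * A) i j = (1 : Matrix (Fin 4) (Fin 4) ℤ) i j := by rw [hBA]
      rw [Matrix.mul_apply, Fin.sum_univ_four] at h
      rw [h, Matrix.one_apply]
    have b03 : B 0 3 = 0 := by
      have h := key 0 3
      rw [ha2 0 3 (by decide), ha2 1 3 (by decide), ha2 2 3 (by decide), ha1 3,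
        if_neg (by decide)] at h
      simpa using h
    have b13 : B 1 3 = 0 := by
      have h := key 1 3
      rw [ha2 0 3 (by decide), ha2 1 3 (by decide), ha2 2 3 (by decide), ha1 3,
        if_neg (by decide)] at h
      simpa using h
    have b23 : B 2 3 = 0 := by
      have h := key 2 3
      rw [ha2 0 3 (by decide), ha2 1 3 (by decide), ha2 2 3 (by decide), ha1 3,
        if_neg (by decide)] at h
      simpa using h
    have b33 : B 3 3 = 1 := by
      have h := key 3 3
      rw [ha2 0 3 (by decide), ha2 1 3 (by decide), ha2 2 3 (by decide), ha1 3,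
        if_pos rfl] at h
      simpa using h
    have b02 : B 0 2 = 0 := by
      have h := key 0 2
      rw [ha2 0 2 (by decide), ha2 1 2 (by decide), ha1 2, b03, if_neg (by decide)] at h
      simpa using h
    have b12 : B 1 2 = 0 := by
      have h := key 1 2
      rw [ha2 0 2 (by decide), ha2 1 2 (by decide), ha1 2, b13, if_neg (by decide)] at h
      simpa using h
    have b22 : B 2 2 = 1 := by
      have h := key 2 2
      rw [ha2 0 2 (by decide), ha2 1 2 (by decide), ha1 2, b23, if_pos rfl] at h
      simpa using h
    have b01 : B 0 1 = 0 := by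
      have h := key 0 1
      rw [ha2 0 1 (by decide), ha1 1, b02, b03, if_neg (by decide)] at h
      simpa using h
    have b11 : B 1 1 = 1 := by
      have h := key 1 1
      rw [ha2 0 1 (by decide), ha1 1, b12, b13, if_pos rfl] at h
      simpa using h
    have b00 : B 0 0 = 1 := by
      have h := key 0 0
      rw [ha1 0, b01, b02, b03, if_pos rfl] at h
      simpa using h
    refine ⟨fun i => ?_, fun i j hij => ?_⟩
    · fin_cases i
      · exact b00
      · exact b11
      · exact b22
      · exact b33
    · fin_cases i <;> fin_cases j <;>
        first
          | exact absurd hij (by decide)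
          | exact b01
          | exact b02
          | exact b03
          | exact b12
          | exact b13
          | exact b23

/-- Helper to build elements of `N4` from a matrix, an explicit inverse, and proofs. -/
def mkN4 (M N : Matrix (Fin 4) (Fin 4) ℤ) (h1 : M * N = 1) (h2 : N * M = 1)
    (h : IsUnitriLower M) : N4 :=
  ⟨⟨M, N, h1, h2⟩, h⟩

/-- The generator `e` of `N₄`: entry `1` in position (2,1). -/
def e4 : N4 :=
  mkN4 !![1,0,0,0; 1,1,0,0; 0,0,1,0; 0,0,0,1] !![1,0,0,0; -1,1,0,0; 0,0,1,0; 0,0,0,1]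
    (by decide) (by decide) (by
      refine ⟨fun i => ?_, fun i j hij => ?_⟩
      · fin_cases i <;> rfl
      · fin_cases i <;> fin_cases j <;> first | rfl | exact absurd hij (by decide))

/-- The generator `f` of `N₄`: entry `1` in position (3,2). -/
def f4 : N4 :=
  mkN4 !![1,0,0,0; 0,1,0,0; 0,1,1,0; 0,0,0,1] !![1,0,0,0; 0,1,0,0; 0,-1,1,0; 0,0,0,1]
    (by decide) (by decide) (by
      refine ⟨fun i => ?_, fun i j hij => ?_⟩
      · fin_cases i <;> rfl
      · fin_cases i <;> fin_cases j <;> first | rfl | exact absurd hij (by decide))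

/-- The generator `d` of `N₄`: entry `1` in position (4,3). -/
def d4 : N4 :=
  mkN4 !![1,0,0,0; 0,1,0,0; 0,0,1,0; 0,0,1,1] !![1,0,0,0; 0,1,0,0; 0,0,1,0; 0,0,-1,1]
    (by decide) (by decide) (by
      refine ⟨fun i => ?_, fun i j hij => ?_⟩
      · fin_cases i <;> rfl
      · fin_cases i <;> fin_cases j <;> first | rfl | exact absurd hij (by decide))

/-- The generator `a` of `N₄`: entry `1` in position (3,1). -/
def a4 : N4 :=
  mkN4 !![1,0,0,0; 0,1,0,0; 1,0,1,0; 0,0,0,1] !![1,0,0,0; 0,1,0,0; -1,0,1,0; 0,0,0,1]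
    (by decide) (by decide) (by
      refine ⟨fun i => ?_, fun i j hij => ?_⟩
      · fin_cases i <;> rfl
      · fin_cases i <;> fin_cases j <;> first | rfl | exact absurd hij (by decide))

/-- The generator `b` of `N₄`: entry `1` in position (4,2). -/
def b4 : N4 :=
  mkN4 !![1,0,0,0; 0,1,0,0; 0,0,1,0; 0,1,0,1] !![1,0,0,0; 0,1,0,0; 0,0,1,0; 0,-1,0,1]
    (by decide) (by decide) (by
      refine ⟨fun i => ?_, fun i j hij => ?_⟩
      · fin_cases i <;> rfl
      · fin_cases i <;> fin_cases j <;> first | rfl | exact absurd hij (by decide))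

/-- The generator `c` of `N₄`: entry `1` in position (4,1). -/
def c4 : N4 :=
  mkN4 !![1,0,0,0; 0,1,0,0; 0,0,1,0; 1,0,0,1] !![1,0,0,0; 0,1,0,0; 0,0,1,0; -1,0,0,1]
    (by decide) (by decide) (by
      refine ⟨fun i => ?_, fun i j hij => ?_⟩
      · fin_cases i <;> rfl
      · fin_cases i <;> fin_cases j <;> first | rfl | exact absurd hij (by decide))

/-- The unit interval `[0,1]` as a subset of `ℝ`. -/
noncomputable def II : Set ℝ := Set.Icc 0 1

/-- `f : ℝ → ℝ` restricts to an orientation-preserving homeomorphism of `[0,1]`. -/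
def IsOPHomeoI (f : ℝ → ℝ) : Prop :=
  Set.BijOn f II II ∧ StrictMonoOn f II ∧ ContinuousOn f II

/-- `g` is `β`-Hölder continuous on `[0,1]` with constant `C`. -/
def HolderOnI (β C : ℝ) (g : ℝ → ℝ) : Prop :=
  ∀ x ∈ II, ∀ y ∈ II, |g x - g y| ≤ C * |x - y| ^ β

/-- `f : ℝ → ℝ` restricts to an orientation-preserving `C¹` diffeomorphism of `[0,1]`:
a strictly increasing bijection of `[0,1]`, continuously differentiable on `[0,1]`
with everywhere positive derivative. -/
def IsC1DiffeoI (f : ℝ → ℝ) : Prop :=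
  Set.BijOn f II II ∧ StrictMonoOn f II ∧
    (∀ x ∈ II, HasDerivWithinAt f (derivWithin f II x) II x) ∧
    ContinuousOn (derivWithin f II) II ∧
    ∀ x ∈ II, 0 < derivWithin f II x

/-- `f : ℝ → ℝ` restricts to an orientation-preserving `C^{1+α}` diffeomorphism of `[0,1]`:
a `C¹` diffeomorphism whose derivative is `α`-Hölder continuous. -/
def IsC1aDiffeoI (α : ℝ) (f : ℝ → ℝ) : Prop :=
  IsC1DiffeoI f ∧ ∃ C > 0, HolderOnI α C (derivWithin f II)

/-- `φ` is an action of `G` on `[0,1]`: `φ 1` is the identity on `[0,1]` and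
`φ (g * h)` is the composition `φ g ∘ φ h` on `[0,1]`. -/
def IsActionOnI {G : Type*} [Group G] (φ : G → ℝ → ℝ) : Prop :=
  Set.EqOn (φ 1) id II ∧ ∀ g h : G, Set.EqOn (φ (g * h)) (φ g ∘ φ h) II

/-- The action `φ` of `G` on `[0,1]` is faithful: elements acting identically
on `[0,1]` coincide. -/
def FaithfulOnI {G : Type*} [Group G] (φ : G → ℝ → ℝ) : Prop :=
  ∀ g h : G, Set.EqOn (φ g) (φ h) II → g = h

/-- `J_g(x) = [inf_{n ∈ ℤ} gⁿ(x), sup_{n ∈ ℤ} gⁿ(x)]` for the action `φ`. -/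
noncomputable def Jseg {G : Type*} [Group G] (φ : G → ℝ → ℝ) (g : G) (x : ℝ) : Set ℝ :=
  Set.Icc (⨅ n : ℤ, φ (g ^ n) x) (⨆ n : ℤ, φ (g ^ n) x)

/-- The map `f` moves the set `s`: `f(s)` and `s` are distinct and have
disjoint interiors. -/
def MovesSet (f : ℝ → ℝ) (s : Set ℝ) : Prop :=
  f '' s ≠ s ∧ Disjoint (interior (f '' s)) (interior s)

section AuxN4

/-- Generic lower unitriangular 4×4 matrix from its six below-diagonal entries. -/
def Amat (p q r s t u : ℤ) : Matrix (Fin 4) (Fin 4) ℤ :=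
  !![1,0,0,0; p,1,0,0; q,r,1,0; s,t,u,1]

/-- Element of `N4` with entries `α` at (4,1) and `β` at (4,2). -/
def hzN (α β : ℤ) : N4 :=
  mkN4 !![1,0,0,0; 0,1,0,0; 0,0,1,0; α,β,0,1] !![1,0,0,0; 0,1,0,0; 0,0,1,0; -α,-β,0,1]
    (by ext i j; fin_cases i <;> fin_cases j <;>
        simp [Matrix.mul_apply, Fin.sum_univ_four, Matrix.one_apply])
    (by ext i j; fin_cases i <;> fin_cases j <;>
        simp [Matrix.mul_apply, Fin.sum_univ_four, Matrix.one_apply])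
    (by refine ⟨fun i => ?_, fun i j hij => ?_⟩
        · fin_cases i <;> rfl
        · fin_cases i <;> fin_cases j <;> first | exact absurd hij (by decide) | rfl)

/-- Powers of the central generator `c`. -/
def czN (m : ℤ) : N4 := hzN m 0

lemma N4_ext {x y : N4} (h : x.val.val = y.val.val) : x = y := Subtype.ext (Units.ext h)

lemma n4_val_mul (x y : N4) : (x * y).val.val = x.val.val * y.val.val := rfl

lemma hzN_val (α β : ℤ) :
    (hzN α β).val.val = !![1,0,0,0; 0,1,0,0; 0,0,1,0; α,β,0,1] := rfl

lemma b4_val : b4.val.val = !![1,0,0,0; 0,1,0,0; 0,0,1,0; 0,1,0,1] := rfl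
lemma a4_val : a4.val.val = !![1,0,0,0; 0,1,0,0; 1,0,1,0; 0,0,0,1] := rfl
lemma d4_val : d4.val.val = !![1,0,0,0; 0,1,0,0; 0,0,1,0; 0,0,1,1] := rfl
lemma e4_val : e4.val.val = !![1,0,0,0; 1,1,0,0; 0,0,1,0; 0,0,0,1] := rfl

lemma czN_zero : czN 0 = 1 := N4_ext (by decide)

lemma czN_mul (m n : ℤ) : czN m * czN n = czN (m + n) := by
  apply N4_ext
  rw [n4_val_mul]
  show (hzN m 0).val.val * (hzN n 0).val.val = (hzN (m+n) 0).val.val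
  rw [hzN_val, hzN_val, hzN_val]
  ext i j; fin_cases i <;> fin_cases j <;>
    simp [Matrix.mul_apply, Fin.sum_univ_four, Matrix.vecHead, Matrix.vecTail] <;> ring

lemma c4_eq_czN : c4 = czN 1 := N4_ext rfl

lemma czN_zpow (m : ℤ) : c4 ^ m = czN m := by
  induction m using Int.induction_on with
  | zero => rw [zpow_zero, czN_zero]
  | succ n ih => rw [zpow_add_one, ih, c4_eq_czN, czN_mul]
  | pred n ih =>
      have hinv : (czN 1)⁻¹ = czN (-1) := by
        symm
        apply eq_inv_of_mul_eq_one_left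
        rw [czN_mul]; norm_num [czN_zero]
      rw [zpow_sub_one, ih, c4_eq_czN, hinv, czN_mul]
      congr 1 <;> omega

lemma comm_b4 (g : N4) (p q r s t u : ℤ) (hg : g.val.val = Amat p q r s t u) :
    g * b4 = czN (-p) * (b4 * g) := by
  apply N4_ext
  rw [n4_val_mul, n4_val_mul, n4_val_mul, hg]
  show Amat p q r s t u * b4.val.val = (hzN (-p) 0).val.val * (b4.val.val * Amat p q r s t u)
  rw [b4_val, hzN_val, Amat]
  ext i j; fin_cases i <;> fin_cases j <;>
    simp [Matrix.mul_apply, Fin.sum_univ_four, Matrix.vecHead, Matrix.vecTail] <;> ring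

lemma comm_a4 (g : N4) (p q r s t u : ℤ) (hg : g.val.val = Amat p q r s t u) :
    g * a4 = czN u * (a4 * g) := by
  apply N4_ext
  rw [n4_val_mul, n4_val_mul, n4_val_mul, hg]
  show Amat p q r s t u * a4.val.val = (hzN u 0).val.val * (a4.val.val * Amat p q r s t u)
  rw [a4_val, hzN_val, Amat]
  ext i j; fin_cases i <;> fin_cases j <;>
    simp [Matrix.mul_apply, Fin.sum_univ_four, Matrix.vecHead, Matrix.vecTail] <;> ring

lemma comm_d4 (g : N4) (q r s t : ℤ) (hg : g.val.val = Amat 0 q r s t 0) :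
    g * d4 = hzN (-q) (-r) * (d4 * g) := by
  apply N4_ext
  rw [n4_val_mul, n4_val_mul, n4_val_mul, hg]
  rw [d4_val, hzN_val, Amat]
  ext i j; fin_cases i <;> fin_cases j <;>
    simp [Matrix.mul_apply, Fin.sum_univ_four, Matrix.vecHead, Matrix.vecTail] <;> ring

lemma comm_e4_hz (α β : ℤ) :
    hzN α β * e4 = czN β * (e4 * hzN α β) := by
  apply N4_ext
  rw [n4_val_mul, n4_val_mul, n4_val_mul]
  show (hzN α β).val.val * e4.val.val = (hzN β 0).val.val * (e4.val.val * (hzN α β).val.val)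
  simp only [e4_val, hzN_val]
  ext i j; fin_cases i <;> fin_cases j <;>
    simp [Matrix.mul_apply, Fin.sum_univ_four, Matrix.vecHead, Matrix.vecTail] <;> ring

lemma comm_e4 (g : N4) (s t : ℤ) (hg : g.val.val = Amat 0 0 0 s t 0) :
    g * e4 = czN t * (e4 * g) := by
  apply N4_ext
  rw [n4_val_mul, n4_val_mul, n4_val_mul, hg]
  show Amat 0 0 0 s t 0 * e4.val.val = (hzN t 0).val.val * (e4.val.val * Amat 0 0 0 s t 0)
  rw [e4_val, hzN_val, Amat]
  ext i j; fin_cases i <;> fin_cases j <;>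
    simp [Matrix.mul_apply, Fin.sum_univ_four, Matrix.vecHead, Matrix.vecTail] <;> ring

lemma g_eq_czN (g : N4) (s : ℤ) (hg : g.val.val = Amat 0 0 0 s 0 0) :
    g = czN s := by
  apply N4_ext
  rw [hg]; rfl

lemma n4_decomp (g : N4) :
    g.val.val = Amat (g.val.val 1 0) (g.val.val 2 0) (g.val.val 2 1)
      (g.val.val 3 0) (g.val.val 3 1) (g.val.val 3 2) := by
  obtain ⟨h1, h2⟩ := g.2
  ext i j
  fin_cases i <;> fin_cases j <;>
    simp [Amat] <;>
    first
      | exact h1 _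
      | exact h2 _ _ (by decide)
      | rfl

end AuxN4

/-- **Remark 1.2.** If `N₄` acts faithfully by orientation-preserving homeomorphisms of
`[0,1]` and `x₀ ∈ (0,1)` is not fixed by the generator `c`, then `N₄` acts faithfully on
the orbit of `x₀`: the only element fixing every point of the orbit is the identity. -/
theorem N4_faithful_on_orbit (φ : N4 → ℝ → ℝ)
    (hact : IsActionOnI φ) (hhomeo : ∀ g : N4, IsOPHomeoI (φ g))
    (hfaith : FaithfulOnI φ)
    (x₀ : ℝ) (hx₀ : x₀ ∈ Set.Ioo (0 : ℝ) 1) (hc : φ c4 x₀ ≠ x₀) :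
    ∀ g : N4, (∀ h : N4, φ g (φ h x₀) = φ h x₀) → g = 1 := by
  intro g hgfix
  -- basic facts about the action
  have hx0I : x₀ ∈ II := ⟨hx₀.1.le, hx₀.2.le⟩
  have hmem : ∀ a : N4, φ a x₀ ∈ II := fun a => (hhomeo a).1.mapsTo hx0I
  have hcomp : ∀ a b : N4, φ (a * b) x₀ = φ a (φ b x₀) := fun a b => hact.2 a b hx0I
  have hone : φ 1 x₀ = x₀ := hact.1 hx0I
  have hmono : StrictMonoOn (φ c4) II := (hhomeo c4).2.1
  -- powers of c4 never fix x₀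
  have hne : ∀ n : ℕ, φ (c4 ^ (n + 1)) x₀ ≠ x₀ := by
    have hstep : ∀ k : ℕ, φ (c4 ^ (k + 1 + 1)) x₀ = φ c4 (φ (c4 ^ (k + 1)) x₀) := by
      intro k
      rw [← hcomp, ← pow_succ']
    rcases lt_or_gt_of_ne hc with hlt | hgt
    · have chain : ∀ n : ℕ, φ (c4 ^ (n + 1)) x₀ < x₀ := by
        intro n
        induction n with
        | zero => rw [pow_one]; exact hlt
        | succ k ih =>
            rw [hstep k]
            calc φ c4 (φ (c4 ^ (k + 1)) x₀) < φ c4 x₀ := hmono (hmem _) hx0I ih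
              _ < x₀ := hlt
      exact fun n => (chain n).ne
    · have chain : ∀ n : ℕ, x₀ < φ (c4 ^ (n + 1)) x₀ := by
        intro n
        induction n with
        | zero => rw [pow_one]; exact hgt
        | succ k ih =>
            rw [hstep k]
            calc x₀ < φ c4 x₀ := hgt
              _ < φ c4 (φ (c4 ^ (k + 1)) x₀) := hmono hx0I (hmem _) ih
      exact fun n => (chain n).ne'
  -- a z-power of c4 fixing x₀ must be trivial
  have hfixpow : ∀ m : ℤ, φ (czN m) x₀ = x₀ → m = 0 := by
    have key : ∀ k : ℤ, 0 < k → φ (c4 ^ k) x₀ = x₀ → False := by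
      intro k hk hfk
      obtain ⟨n, hn⟩ : ∃ n : ℕ, k = (n : ℤ) + 1 := ⟨(k - 1).toNat, by omega⟩
      have hkpow : c4 ^ k = c4 ^ (n + 1) := by
        rw [hn, ← zpow_natCast]
        push_cast
        ring_nf
      rw [hkpow] at hfk
      exact hne n hfk
    intro m hm
    rw [← czN_zpow] at hm
    by_contra hm0
    rcases lt_or_gt_of_ne hm0 with hmlt | hmgt
    · have h1 : c4 ^ (-m) * c4 ^ m = 1 := by
        rw [← zpow_add]; simp
      have h2 : φ (c4 ^ (-m) * c4 ^ m) x₀ = φ (c4 ^ (-m)) (φ (c4 ^ m) x₀) := hcomp _ _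
      rw [h1, hone, hm] at h2
      exact key (-m) (by omega) h2.symm
    · exact key m hmgt hm
  -- The "fixes the whole orbit" predicate and its closure properties
  have hPg : ∀ h : N4, φ (g * h) x₀ = φ h x₀ := fun h => by
    rw [hcomp]; exact hgfix h
  have Ppt : ∀ a : N4, (∀ h, φ (a * h) x₀ = φ h x₀) → φ a x₀ = x₀ := by
    intro a ha
    have := ha 1
    rwa [mul_one, hone] at this
  have Pmul : ∀ a b : N4, (∀ h, φ (a * h) x₀ = φ h x₀) → (∀ h, φ (b * h) x₀ = φ h x₀) →
      ∀ h, φ (a * b * h) x₀ = φ h x₀ := by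
    intro a b ha hb h
    rw [mul_assoc]
    exact (ha (b * h)).trans (hb h)
  have Pinv : ∀ a : N4, (∀ h, φ (a * h) x₀ = φ h x₀) → ∀ h, φ (a⁻¹ * h) x₀ = φ h x₀ := by
    intro a ha h
    have h2 := ha (a⁻¹ * h)
    rw [mul_inv_cancel_left] at h2
    exact h2.symm
  have Pconj : ∀ a w : N4, (∀ h, φ (a * h) x₀ = φ h x₀) →
      ∀ h, φ (w * a * w⁻¹ * h) x₀ = φ h x₀ := by
    intro a w ha h
    have e : w * a * w⁻¹ * h = w * (a * (w⁻¹ * h)) := by group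
    rw [e, hcomp, ha (w⁻¹ * h), ← hcomp, mul_inv_cancel_left]
  have Pswap : ∀ a z w : N4, (∀ h, φ (a * h) x₀ = φ h x₀) → a * w = z * (w * a) →
      ∀ h, φ (z * h) x₀ = φ h x₀ := by
    intro a z w ha he
    have e : z = a * (w * a⁻¹ * w⁻¹) := by
      have h1 : z * (w * a) = (a * (w * a⁻¹ * w⁻¹)) * (w * a) := by
        rw [← he]; group
      exact mul_right_cancel h1
    rw [e]
    exact Pmul a _ ha (Pconj a⁻¹ w (Pinv a ha))
  -- extract the matrix entries of g
  have hgm := n4_decomp g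
  -- entry (2,1) vanishes
  have hp0 : g.val.val 1 0 = 0 := by
    have hz := Pswap g _ b4 hPg (comm_b4 g _ _ _ _ _ _ hgm)
    have := hfixpow _ (Ppt _ hz)
    omega
  -- entry (4,3) vanishes
  have hu0 : g.val.val 3 2 = 0 := by
    have hz := Pswap g _ a4 hPg (comm_a4 g _ _ _ _ _ _ hgm)
    exact hfixpow _ (Ppt _ hz)
  rw [hp0, hu0] at hgm
  -- row-4 commutator with d4
  have hPh := Pswap g _ d4 hPg (comm_d4 g _ _ _ _ hgm)
  -- entry (3,2) vanishes
  have hr0 : g.val.val 2 1 = 0 := by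
    have hz := Pswap _ _ e4 hPh (comm_e4_hz (-(g.val.val 2 0)) (-(g.val.val 2 1)))
    have := hfixpow _ (Ppt _ hz)
    omega
  -- entry (3,1) vanishes
  have hq0 : g.val.val 2 0 = 0 := by
    rw [hr0, neg_zero] at hPh
    have := hfixpow _ (Ppt _ hPh)
    omega
  rw [hq0, hr0] at hgm
  -- entry (4,2) vanishes
  have ht0 : g.val.val 3 1 = 0 := by
    have hz := Pswap g _ e4 hPg (comm_e4 g _ _ hgm)
    exact hfixpow _ (Ppt _ hz)
  rw [ht0] at hgm
  -- g is a power of c, and that power fixes x₀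
  have hgc : g = czN (g.val.val 3 0) := g_eq_czN g _ hgm
  have hs0 : g.val.val 3 0 = 0 := by
    apply hfixpow
    rw [← hgc]
    exact Ppt _ hPg
  rw [hgc, hs0, czN_zero]
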